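/- Let M be an m×n integer matrix and N an l×n integer matrix whose columns b_1,...,b_n span Q^l as a Q-vector space. If every ideal of K[x_1,...,x_n] that is homogeneous with respect to the multigrading deg(x_i) = b_i is also homogeneous with respect to the multigrading deg(x_i) = a_i (the columns of M), then there exists a Q-linear map π: Q^l → Q^m with π(b_i) = a_i for all i = 1,...,n. -/

import Mathlib

open MvPolynomial

/-- The multidegree of a monomial exponent `e` with respect to the multigrading
given by the columns of the integer matrix `M` (column `i` is the degree of `xᵢ`). -/
def mdeg {m n : ℕ} (M : Matrix (Fin m) (Fin n) ℤ) (e : Fin n →₀ ℕ) : Fin m → ℤ :=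
  fun j => ∑ i, (e i : ℤ) * M j i

/-- A polynomial is homogeneous for the multigrading given by the columns of `M`
if all monomials in its support have the same multidegree. -/
def IsMHomog {m n : ℕ} (K : Type*) [Field K] (M : Matrix (Fin m) (Fin n) ℤ)
    (f : MvPolynomial (Fin n) K) : Prop :=
  ∀ e ∈ f.support, ∀ e' ∈ f.support, mdeg M e = mdeg M e'

/-- An ideal is homogeneous for the multigrading given by the columns of `M`
if it is generated by homogeneous polynomials. -/
def IsMHomogIdeal {m n : ℕ} (K : Type*) [Field K] (M : Matrix (Fin m) (Fin n) ℤ)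
    (I : Ideal (MvPolynomial (Fin n) K)) : Prop :=
  ∃ S : Set (MvPolynomial (Fin n) K), (∀ f ∈ S, IsMHomog K M f) ∧ I = Ideal.span S

section Aux

variable {m n : ℕ} (M : Matrix (Fin m) (Fin n) ℤ)

lemma mdeg_add (e e' : Fin n →₀ ℕ) : mdeg M (e + e') = mdeg M e + mdeg M e' := by
  funext j
  simp only [mdeg, Pi.add_apply, Finsupp.add_apply, ← Finset.sum_add_distrib]
  refine Finset.sum_congr rfl fun i _ => ?_
  push_cast
  ring

variable (K : Type*) [Field K]

open Classical in
/-- The `M`-homogeneous component of degree `d` of a polynomial. -/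
noncomputable def comp (d : Fin m → ℤ) (f : MvPolynomial (Fin n) K) :
    MvPolynomial (Fin n) K :=
  ∑ e ∈ f.support, if mdeg M e = d then monomial e (coeff e f) else 0

lemma coeff_comp (d : Fin m → ℤ) (f : MvPolynomial (Fin n) K) (u : Fin n →₀ ℕ) :
    coeff u (comp M K d f) = if mdeg M u = d then coeff u f else 0 := by
  classical
  rw [comp, coeff_sum]
  by_cases hu : u ∈ f.support
  · rw [Finset.sum_eq_single u]
    · split_ifs with h
      · simp [coeff_monomial]
      · simp
    · intro b _ hbu
      split_ifs <;> simp [coeff_monomial, hbu]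
    · intro hc
      exact absurd hu hc
  · have h0 : coeff u f = 0 := by simpa [mem_support_iff] using hu
    rw [h0]
    simp only [ite_self]
    apply Finset.sum_eq_zero
    intro e he
    have hne : e ≠ u := fun hh => hu (hh ▸ he)
    split_ifs <;> simp [coeff_monomial, hne]

lemma comp_zero (d : Fin m → ℤ) : comp M K d 0 = 0 := by
  simp [comp]

lemma comp_add (d : Fin m → ℤ) (f g : MvPolynomial (Fin n) K) :
    comp M K d (f + g) = comp M K d f + comp M K d g := by
  ext u
  simp only [coeff_comp, coeff_add]
  split_ifs <;> simp

lemma comp_sum {ι : Type*} (d : Fin m → ℤ) (s : Finset ι)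
    (F : ι → MvPolynomial (Fin n) K) :
    comp M K d (∑ i ∈ s, F i) = ∑ i ∈ s, comp M K d (F i) := by
  induction s using Finset.cons_induction with
  | empty => simp [comp_zero]
  | cons i s hi ih => simp [Finset.sum_cons, comp_add, ih]

lemma comp_mul_homog (d dg : Fin m → ℤ) (p g : MvPolynomial (Fin n) K)
    (hg : ∀ v ∈ g.support, mdeg M v = dg) :
    comp M K d (p * g) = comp M K (fun j => d j - dg j) p * g := by
  classical
  ext u
  rw [coeff_comp, coeff_mul, coeff_mul]
  by_cases hu : mdeg M u = d
  · rw [if_pos hu]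
    refine Finset.sum_congr rfl fun x hx => ?_
    by_cases hx2 : coeff x.2 g = 0
    · simp [hx2]
    · have hv : mdeg M x.2 = dg := hg _ (by simpa [mem_support_iff] using hx2)
      have hxe : x.1 + x.2 = u := Finset.HasAntidiagonal.mem_antidiagonal.mp hx
      have h2 : mdeg M x.1 + mdeg M x.2 = d := by rw [← mdeg_add, hxe, hu]
      have h1 : mdeg M x.1 = fun j => d j - dg j := by
        funext j
        have ha := congrFun h2 j
        have hb := congrFun hv j
        simp only [Pi.add_apply] at ha
        omega
      rw [coeff_comp, if_pos h1]
  · rw [if_neg hu]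
    symm
    apply Finset.sum_eq_zero
    intro x hx
    by_cases hx2 : coeff x.2 g = 0
    · simp [hx2]
    · have hv : mdeg M x.2 = dg := hg _ (by simpa [mem_support_iff] using hx2)
      have hxe : x.1 + x.2 = u := Finset.HasAntidiagonal.mem_antidiagonal.mp hx
      have h1 : mdeg M x.1 ≠ fun j => d j - dg j := by
        intro hc
        apply hu
        rw [← hxe, mdeg_add, hc, hv]
        funext j
        simp
      rw [coeff_comp, if_neg h1, zero_mul]

lemma comp_mem_span (S : Set (MvPolynomial (Fin n) K))
    (hS : ∀ g ∈ S, IsMHomog K M g) (f : MvPolynomial (Fin n) K)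
    (hf : f ∈ Ideal.span S) (d : Fin m → ℤ) :
    comp M K d f ∈ Ideal.span S := by
  classical
  obtain ⟨k, c, g, hsum⟩ := Submodule.mem_span_set'.mp hf
  rw [← hsum, comp_sum]
  apply Ideal.sum_mem
  intro i _
  have hgS : (g i : MvPolynomial (Fin n) K) ∈ S := (g i).2
  by_cases h0 : (g i : MvPolynomial (Fin n) K) = 0
  · rw [smul_eq_mul, h0, mul_zero, comp_zero]
    exact zero_mem _
  · obtain ⟨v, hv⟩ := MvPolynomial.support_nonempty.mpr h0
    have hhom := hS _ hgS
    have hall : ∀ w ∈ (g i : MvPolynomial (Fin n) K).support,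
        mdeg M w = mdeg M v := fun w hw => hhom w hw v hv
    rw [smul_eq_mul, comp_mul_homog M K d (mdeg M v) _ _ hall]
    exact Ideal.mul_mem_left _ _ (Ideal.subset_span hgS)

end Aux

lemma key {l m n : ℕ} (K : Type*) [Field K]
    (M : Matrix (Fin m) (Fin n) ℤ) (N : Matrix (Fin l) (Fin n) ℤ)
    (h : ∀ I : Ideal (MvPolynomial (Fin n) K),
      IsMHomogIdeal K N I → IsMHomogIdeal K M I)
    (e e' : Fin n →₀ ℕ) (hN : mdeg N e = mdeg N e') : mdeg M e = mdeg M e' := by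
  classical
  by_cases hee : e = e'
  · rw [hee]
  by_contra hM
  set f : MvPolynomial (Fin n) K := monomial e 1 - monomial e' 1 with hfdef
  have hsupp : f.support ⊆ {e, e'} := by
    intro u hu
    rw [mem_support_iff] at hu
    simp only [hfdef, coeff_sub, coeff_monomial] at hu
    by_contra hc
    simp only [Finset.mem_insert, Finset.mem_singleton, not_or] at hc
    rw [if_neg (fun hh => hc.1 hh.symm), if_neg (fun hh => hc.2 hh.symm)] at hu
    exact hu (by ring)
  have hfhom : IsMHomog K N f := by
    intro a ha b hb
    have ha' := hsupp ha
    have hb' := hsupp hb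
    simp only [Finset.mem_insert, Finset.mem_singleton] at ha' hb'
    rcases ha' with rfl | rfl <;> rcases hb' with rfl | rfl <;> simp [hN]
  obtain ⟨S, hS, hIS⟩ := h (Ideal.span {f}) ⟨{f}, by simpa using hfhom, rfl⟩
  have hfmem : f ∈ Ideal.span S := by
    rw [← hIS]
    exact Ideal.subset_span rfl
  have hcomp : comp M K (mdeg M e) f = monomial e 1 := by
    ext u
    rw [coeff_comp]
    simp only [hfdef, coeff_sub, coeff_monomial]
    by_cases hue : e = u
    · subst hue
      simp [Ne.symm hee]
    · by_cases hmu : mdeg M u = mdeg M e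
      · have hue' : e' ≠ u := by
          rintro rfl
          exact hM hmu.symm
        simp [hue, hue', hmu]
      · simp [hue, hmu]
  have hmon : (monomial e 1 : MvPolynomial (Fin n) K) ∈ Ideal.span {f} := by
    have := comp_mem_span M K S hS f hfmem (mdeg M e)
    rw [hcomp] at this
    rwa [hIS]
  obtain ⟨r, hr⟩ := Ideal.mem_span_singleton'.mp hmon
  have heval := congrArg (eval (fun _ : Fin n => (1 : K))) hr
  simp [hfdef, eval_monomial, Finsupp.prod] at heval

theorem stmt2 (K : Type*) [Field K] {l m n : ℕ}
    (M : Matrix (Fin m) (Fin n) ℤ) (N : Matrix (Fin l) (Fin n) ℤ)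
    (hspan : Submodule.span ℚ
      (Set.range fun i : Fin n => fun j : Fin l => (N j i : ℚ)) = ⊤)
    (h : ∀ I : Ideal (MvPolynomial (Fin n) K),
      IsMHomogIdeal K N I → IsMHomogIdeal K M I) :
    ∃ π : (Fin l → ℚ) →ₗ[ℚ] (Fin m → ℚ),
      ∀ i : Fin n, π (fun j => (N j i : ℚ)) = fun j => (M j i : ℚ) := by
  classical
  have hkey : ∀ e e' : Fin n →₀ ℕ, mdeg N e = mdeg N e' → mdeg M e = mdeg M e' :=
    key K M N h
  -- Kernel condition over ℚ
  have hker : ∀ q : Fin n → ℚ, (∀ j, ∑ i, q i * N j i = 0) →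
      (∀ j, ∑ i, q i * M j i = 0) := by
    intro q hq
    set d : ℕ := ∏ i, (q i).den with hd
    have hd0 : (d : ℚ) ≠ 0 := by
      rw [hd]
      push_cast
      apply Finset.prod_ne_zero_iff.mpr
      intro i _
      exact_mod_cast (q i).den_nz
    have hc : ∀ i, ∃ z : ℤ, (z : ℚ) = q i * d := by
      intro i
      obtain ⟨t, ht⟩ : ((q i).den : ℕ) ∣ d := Finset.dvd_prod_of_mem _ (Finset.mem_univ i)
      refine ⟨(q i).num * t, ?_⟩
      rw [ht]
      push_cast
      rw [show (q i : ℚ) * (((q i).den : ℚ) * (t : ℚ)) = (q i * (q i).den) * t by ring,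
        Rat.mul_den_eq_num]
    choose c hcq using hc
    have hcN : ∀ j, ∑ i, c i * N j i = 0 := by
      intro j
      have hcast : ((∑ i, c i * N j i : ℤ) : ℚ) = 0 := by
        push_cast
        calc ∑ i, (c i : ℚ) * N j i = ∑ i, (d : ℚ) * (q i * N j i) := by
              refine Finset.sum_congr rfl fun i _ => ?_
              rw [hcq i]; ring
          _ = (d : ℚ) * ∑ i, q i * N j i := by rw [Finset.mul_sum]
          _ = 0 := by rw [hq j, mul_zero]
      exact_mod_cast hcast
    set e : Fin n →₀ ℕ := Finsupp.equivFunOnFinite.symm (fun i => (c i).toNat) with he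
    set e' : Fin n →₀ ℕ := Finsupp.equivFunOnFinite.symm (fun i => (-(c i)).toNat) with he'
    have hsub : ∀ (p : ℕ) (P : Matrix (Fin p) (Fin n) ℤ) (j : Fin p),
        mdeg P e j - mdeg P e' j = ∑ i, c i * P j i := by
      intro p P j
      rw [mdeg, mdeg, ← Finset.sum_sub_distrib]
      refine Finset.sum_congr rfl fun i _ => ?_
      rw [he, he']
      simp only [Finsupp.equivFunOnFinite_symm_apply_apply]
      rw [← sub_mul, Int.toNat_sub_toNat_neg]
    have hNe : mdeg N e = mdeg N e' := by
      funext j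
      have h1 := hsub l N j
      rw [hcN j] at h1
      omega
    have hMe := hkey e e' hNe
    have hcM : ∀ j, ∑ i, c i * M j i = 0 := by
      intro j
      have h1 := hsub m M j
      rw [hMe] at h1
      omega
    intro j
    have hfin : (d : ℚ) * ∑ i, q i * M j i = 0 := by
      rw [Finset.mul_sum]
      calc ∑ i, (d : ℚ) * (q i * M j i) = ∑ i, (c i : ℚ) * M j i := by
            refine Finset.sum_congr rfl fun i _ => ?_
            rw [hcq i]; ring
        _ = ((∑ i, c i * M j i : ℤ) : ℚ) := by push_cast; rfl
        _ = 0 := by rw [hcM j]; rfl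
    exact (mul_eq_zero.mp hfin).resolve_left hd0
  -- Build the linear map
  set Nl : (Fin n → ℚ) →ₗ[ℚ] (Fin l → ℚ) :=
    Matrix.mulVecLin (N.map (Int.cast : ℤ → ℚ)) with hNl
  set Ml : (Fin n → ℚ) →ₗ[ℚ] (Fin m → ℚ) :=
    Matrix.mulVecLin (M.map (Int.cast : ℤ → ℚ)) with hMl
  have hNrange : LinearMap.range Nl = ⊤ := by
    rw [hNl, Matrix.range_mulVecLin]
    have : (N.map (Int.cast : ℤ → ℚ)).col =
        fun i : Fin n => fun j : Fin l => (N j i : ℚ) := rfl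
    rw [this]
    exact hspan
  obtain ⟨σ, hσ⟩ := Nl.exists_rightInverse_of_surjective hNrange
  have hcompose : ∀ x, Nl (σ x) = x := by
    intro x
    have := congrFun (congrArg (fun f => f.toFun) hσ) x
    simpa using this
  have happ : ∀ (p : ℕ) (P : Matrix (Fin p) (Fin n) ℤ) (v : Fin n → ℚ),
      Matrix.mulVecLin (P.map (Int.cast : ℤ → ℚ)) v = fun j => ∑ i, v i * P j i := by
    intro p P v
    funext j
    simp [Matrix.mulVecLin_apply, Matrix.mulVec, dotProduct, Matrix.map_apply,
      mul_comm]
  have hkerlin : ∀ v, Nl v = 0 → Ml v = 0 := by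
    intro v hv
    rw [hMl, happ]
    funext j
    refine hker v (fun j' => ?_) j
    have := congrFun hv j'
    rw [hNl, happ] at this
    exact this
  refine ⟨Ml.comp σ, fun i => ?_⟩
  have hsingleN : Nl (Pi.single i 1) = fun j => (N j i : ℚ) := by
    rw [hNl, happ]
    funext j
    simp [Pi.single_apply]
  have hsingleM : Ml (Pi.single i 1) = fun j => (M j i : ℚ) := by
    rw [hMl, happ]
    funext j
    simp [Pi.single_apply]
  have hz : Nl (σ (fun j => (N j i : ℚ)) - Pi.single i 1) = 0 := by
    rw [map_sub, hcompose, hsingleN, sub_self]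
  have hz2 := hkerlin _ hz
  rw [map_sub] at hz2
  have : Ml (σ fun j => (N j i : ℚ)) = Ml (Pi.single i 1) := by
    rwa [sub_eq_zero] at hz2
  rw [LinearMap.comp_apply, this, hsingleM]
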